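/- Let δ_x > 0. For every φ ∈ [0,π), the ray-driven weight function has unit total mass: ∫_ℝ w^rd(φ,t) dt = 1. -/

import Mathlib

open MeasureTheory Real Set Filter

/-- The ray-driven weight function `w^rd(φ, t)` (for spatial resolution `δx`).
Here `κ(φ) = min{1/|cos φ|, 1/|sin φ|}` (with `1/0 = ∞`) is expressed as
`1 / max |cos φ| |sin φ|`, which is the same real number. -/
noncomputable def rayWeight (δx φ t : ℝ) : ℝ :=
  (1 / δx) *
    (if δx / 2 * |(|Real.cos φ| - |Real.sin φ|)| ≤ |t| ∧
        |t| < δx / 2 * (|Real.cos φ| + |Real.sin φ|) then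
      (δx / 2 * (|Real.cos φ| + |Real.sin φ|) - |t|) / (δx * |Real.cos φ * Real.sin φ|)
    else if |t| < δx / 2 * |(|Real.cos φ| - |Real.sin φ|)| then
      1 / max |Real.cos φ| |Real.sin φ|
    else if (φ = 0 ∨ φ = Real.pi / 2) ∧ |t| = δx / 2 * (|Real.cos φ| + |Real.sin φ|) then
      1 / 2
    else 0)

/-- The pixel-driven weight function `w^pd(t)` (for detector resolution `δs`). -/
noncomputable def pixelWeight (δs t : ℝ) : ℝ := (1 / δs ^ 2) * max (δs - |t|) 0

/-- One-sided version of the ray-driven weight, so that `rayWeight δx φ t = rayAux δx φ |t|`. -/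
noncomputable def rayAux (δx φ x : ℝ) : ℝ :=
  (1 / δx) *
    (if δx / 2 * |(|Real.cos φ| - |Real.sin φ|)| ≤ x ∧
        x < δx / 2 * (|Real.cos φ| + |Real.sin φ|) then
      (δx / 2 * (|Real.cos φ| + |Real.sin φ|) - x) / (δx * |Real.cos φ * Real.sin φ|)
    else if x < δx / 2 * |(|Real.cos φ| - |Real.sin φ|)| then
      1 / max |Real.cos φ| |Real.sin φ|
    else if (φ = 0 ∨ φ = Real.pi / 2) ∧ x = δx / 2 * (|Real.cos φ| + |Real.sin φ|) then
      1 / 2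
    else 0)

/-- For `δ_x > 0` and every `φ ∈ [0, π)`, the ray-driven weight function
has unit total mass: `∫_ℝ w^rd(φ, t) dt = 1`. -/
theorem stmt15 (δx : ℝ) (hδx : 0 < δx) (φ : ℝ) (hφ : φ ∈ Set.Ico 0 Real.pi) :
    ∫ t : ℝ, rayWeight δx φ t = 1 := by
  have hray : (fun t : ℝ => rayWeight δx φ t) = fun t : ℝ => rayAux δx φ |t| := rfl
  rw [hray, integral_comp_abs (f := rayAux δx φ)]
  set c := |Real.cos φ| with hc
  set s := |Real.sin φ| with hs
  have hc0 : 0 ≤ c := abs_nonneg _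
  have hs0 : 0 ≤ s := abs_nonneg _
  have hcs1 : c ^ 2 + s ^ 2 = 1 := by
    rw [hc, hs, sq_abs, sq_abs, Real.cos_sq_add_sin_sq]
  set a := δx / 2 * |c - s| with ha
  set b := δx / 2 * (c + s) with hb
  set M := max c s with hM
  set K := δx * (δx * (c * s)) with hK
  have habs : |c - s| ≤ c + s := by
    rcases le_total s c with h | h
    · rw [abs_of_nonneg (sub_nonneg.2 h)]; linarith
    · rw [abs_of_nonpos (sub_nonpos.2 h)]; linarith
  have ha0 : 0 ≤ a := by
    have := abs_nonneg (c - s); positivity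
  have hab : a ≤ b := by
    rw [ha, hb]
    have : (0:ℝ) ≤ δx / 2 := by linarith
    exact mul_le_mul_of_nonneg_left habs this
  -- the a.e. representative as a sum of indicator functions
  set g : ℝ → ℝ := fun x =>
    (Ioo (0:ℝ) a).indicator (fun _ => 1 / (δx * M)) x +
      (Ioc a b).indicator (fun y => (b - y) / K) x with hg
  have hcongr : ∫ x in Ioi (0:ℝ), rayAux δx φ x = ∫ x in Ioi (0:ℝ), g x := by
    refine integral_congr_ae ?_
    have h0 : volume ({a, b} : Set ℝ) = 0 := (Set.toFinite _).measure_zero _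
    have h1 : ∀ᵐ x ∂(volume.restrict (Ioi (0:ℝ))), x ∉ ({a, b} : Set ℝ) :=
      ae_restrict_of_ae (measure_eq_zero_iff_ae_notMem.mp h0)
    have h2 : ∀ᵐ x ∂(volume.restrict (Ioi (0:ℝ))), x ∈ Ioi (0:ℝ) :=
      ae_restrict_mem measurableSet_Ioi
    filter_upwards [h1, h2] with x hx1 hx2
    simp only [mem_insert_iff, mem_singleton_iff, not_or] at hx1
    obtain ⟨hxa, hxb⟩ := hx1
    have hx0 : (0:ℝ) < x := hx2
    rw [rayAux]
    simp only [hg]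
    rw [← hc, ← hs, ← ha, ← hb, ← hM]
    rcases lt_trichotomy x a with h | h | h
    · -- 0 < x < a
      rw [if_neg (by push_neg; intro h'; exact absurd h' (not_le.2 h)),
        if_pos h]
      rw [indicator_of_mem (by exact ⟨hx0, h⟩), indicator_of_notMem (by
        intro hmem; exact absurd hmem.1 (not_lt.2 h.le))]
      rw [add_zero, div_mul_div_comm, one_mul]
    · exact absurd h hxa
    · rcases lt_trichotomy x b with h' | h' | h'
      · -- a < x < b
        rw [if_pos ⟨h.le, h'⟩]
        rw [indicator_of_notMem (by intro hmem; exact absurd hmem.2 (not_lt.2 h.le)),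
          indicator_of_mem (by exact ⟨h, h'.le⟩)]
        rw [zero_add, abs_mul, ← hc, ← hs, div_mul_div_comm, one_mul, ← hK]
      · exact absurd h' hxb
      · -- x > b
        rw [if_neg (by push_neg; intro _; exact h'.le),
          if_neg (not_lt.2 (hab.trans h'.le)),
          if_neg (by intro hmem; exact hxb hmem.2)]
        rw [indicator_of_notMem (by intro hmem; exact absurd hmem.2 (not_lt.2 (hab.trans h'.le))),
          indicator_of_notMem (by intro hmem; exact absurd hmem.2 (not_le.2 h'))]
        simp
  rw [hcongr]
  have hint1 : Integrable ((Ioo (0:ℝ) a).indicator (fun _ => 1 / (δx * M)))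
      (volume.restrict (Ioi (0:ℝ))) := by
    refine (IntegrableOn.integrable_indicator ?_ measurableSet_Ioo).restrict
    exact integrableOn_const measure_Ioo_lt_top.ne
  have hint2 : Integrable ((Ioc a b).indicator (fun y => (b - y) / K))
      (volume.restrict (Ioi (0:ℝ))) := by
    refine (IntegrableOn.integrable_indicator ?_ measurableSet_Ioc).restrict
    exact ((continuous_const.sub continuous_id).div_const K).integrableOn_Ioc
  rw [hg, integral_add hint1 hint2]
  have hsub1 : Ioo (0:ℝ) a ⊆ Ioi (0:ℝ) := fun x hx => hx.1
  have hsub2 : Ioc a b ⊆ Ioi (0:ℝ) := fun x hx => lt_of_le_of_lt ha0 hx.1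
  have I1 : ∫ x in Ioi (0:ℝ), (Ioo (0:ℝ) a).indicator (fun _ => 1 / (δx * M)) x
      = a * (1 / (δx * M)) := by
    rw [setIntegral_indicator measurableSet_Ioo,
      inter_eq_self_of_subset_right hsub1, setIntegral_const, smul_eq_mul,
      measureReal_def, Real.volume_Ioo]
    rw [ENNReal.toReal_ofReal (by linarith)]
    ring
  have I2 : ∫ x in Ioi (0:ℝ), (Ioc a b).indicator (fun y => (b - y) / K) x
      = ((b - a) * b - (b ^ 2 - a ^ 2) / 2) / K := by
    rw [setIntegral_indicator measurableSet_Ioc,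
      inter_eq_self_of_subset_right hsub2,
      ← intervalIntegral.integral_of_le hab, intervalIntegral.integral_div,
      intervalIntegral.integral_sub intervalIntegrable_const intervalIntegral.intervalIntegrable_id,
      intervalIntegral.integral_const, integral_id, smul_eq_mul]
  rw [I1, I2]
  -- final arithmetic
  clear hray hcongr hint1 hint2 I1 I2 hsub1 hsub2 hab ha0 habs hg g
  clear_value K M b a s c
  have hcs0 : 0 < c + s := by nlinarith
  rcases le_total s c with hle | hle
  · have hMc : M = c := hM.trans (max_eq_left hle)
    have habs' : |c - s| = c - s := abs_of_nonneg (sub_nonneg.2 hle)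
    rcases eq_or_lt_of_le hs0 with hs' | hs'
    · -- s = 0, c = 1
      have hc1 : c = 1 := by
        have h2 : (c - 1) * (c + 1) = 0 := by nlinarith
        rcases mul_eq_zero.mp h2 with h | h
        · linarith
        · linarith
      have haa : a = δx / 2 := by rw [ha, ← hs', hc1]; norm_num
      have hbb : b = δx / 2 := by rw [hb, ← hs', hc1]; norm_num
      have hKK : K = 0 := by rw [hK, ← hs']; ring
      have hMM : M = 1 := by rw [hM, ← hs', hc1]; simp
      rw [haa, hbb, hKK, hMM, div_zero]
      field_simp
      norm_num
    · have hc' : 0 < c := lt_of_lt_of_le hs' hle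
      rw [ha, hb, hK, hMc, habs']
      field_simp
      ring
  · have hMs : M = s := hM.trans (max_eq_right hle)
    have habs' : |c - s| = s - c := by rw [abs_sub_comm]; exact abs_of_nonneg (sub_nonneg.2 hle)
    rcases eq_or_lt_of_le hc0 with hc' | hc' 
    · have hs1 : s = 1 := by
        have h2 : (s - 1) * (s + 1) = 0 := by nlinarith
        rcases mul_eq_zero.mp h2 with h | h
        · linarith
        · linarith
      have haa : a = δx / 2 := by rw [ha, ← hc', hs1]; norm_num
      have hbb : b = δx / 2 := by rw [hb, ← hc', hs1]; norm_num
      have hKK : K = 0 := by rw [hK, ← hc']; ring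
      have hMM : M = 1 := by rw [hM, ← hc', hs1]; simp
      rw [haa, hbb, hKK, hMM, div_zero]
      field_simp
      norm_num
    · have hs'' : 0 < s := lt_of_lt_of_le hc' hle
      rw [ha, hb, hK, hMs, habs']
      field_simp
      ring
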